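/- A group that contains a nonabelian free subgroup is not amenable, and the amalgamated free product ℤ *_{nℤ = mℤ} ℤ (two copies of ℤ amalgamated over index-n and index-m subgroups) contains a nonabelian free subgroup whenever n ≥ 2 and m ≥ 3. -/

import Mathlib

open Monoid

/-- A finitely additive left-invariant probability measure ("mean") on all subsets of `G`. -/
structure LeftInvariantMean (G : Type*) [Group G] where
  m : Set G → ℝ
  nonneg : ∀ s : Set G, 0 ≤ m s
  total : m Set.univ = 1
  addDisjoint : ∀ s t : Set G, Disjoint s t → m (s ∪ t) = m s + m t
  leftInvariant : ∀ (g : G) (s : Set G), m ((g * ·) '' s) = m s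

/-- A group is amenable if it admits a finitely additive left-invariant
probability measure on all of its subsets. -/
def Amenable (G : Type*) [Group G] : Prop := Nonempty (LeftInvariantMean G)

/-- The maps of the amalgam `ℤ *_ℤ ℤ`: the base copy of `ℤ` embeds as `nℤ` in the first
factor and as `mℤ` in the second factor. -/
def cyclicAmalgamMaps (n m : ℤ) : ∀ _ : Bool, (Multiplicative ℤ →* Multiplicative ℤ) :=
  fun i => if i then zpowGroupHom n else zpowGroupHom m

namespace AmalgamAux

/-! ### Basic mean lemmas -/

variable {G : Type*} [Group G]

theorem mean_mono (M : LeftInvariantMean G) {s t : Set G} (h : s ⊆ t) : M.m s ≤ M.m t := by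
  have hu : s ∪ (t \ s) = t := Set.union_diff_cancel h
  have hd : Disjoint s (t \ s) := Set.disjoint_sdiff_right
  have := M.addDisjoint s (t \ s) hd
  rw [hu] at this
  have := M.nonneg (t \ s)
  linarith

theorem mean_union_le (M : LeftInvariantMean G) (s t : Set G) :
    M.m (s ∪ t) ≤ M.m s + M.m t := by
  have hu : s ∪ (t \ s) = s ∪ t := by
    rw [Set.union_diff_self]
  have hd : Disjoint s (t \ s) := Set.disjoint_sdiff_right
  have h1 := M.addDisjoint s (t \ s) hd
  rw [hu] at h1
  have h2 : M.m (t \ s) ≤ M.m t := mean_mono M (Set.diff_subset)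
  linarith

/-! ### Amenability passes along injective homomorphisms -/

variable {H : Type*} [Group H]

def cosetSetoid (f : H →* G) : Setoid G where
  r a b := ∃ h : H, f h * b = a
  iseqv := by
    refine ⟨fun a => ⟨1, by simp⟩, ?_, ?_⟩
    · rintro a b ⟨h, rfl⟩
      exact ⟨h⁻¹, by simp⟩
    · rintro a b c ⟨h₁, rfl⟩ ⟨h₂, rfl⟩
      exact ⟨h₁ * h₂, by simp [mul_assoc]⟩

noncomputable def rep (f : H →* G) (g : G) : G :=
  (Quotient.mk (cosetSetoid f) g).out

theorem rep_spec (f : H →* G) (g : G) : ∃ h : H, f h * rep f g = g := by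
  obtain ⟨h, hh⟩ := @Quotient.mk_out G (cosetSetoid f) g
  refine ⟨h⁻¹, ?_⟩
  show f h⁻¹ * (Quotient.mk (cosetSetoid f) g).out = g
  rw [← hh, map_inv, inv_mul_cancel_left]

theorem rep_eq (f : H →* G) {a b : G} (h : H) (hab : f h * b = a) : rep f a = rep f b := by
  unfold rep
  congr 1
  exact Quotient.sound ⟨h, hab⟩

noncomputable def pullSet (f : H →* G) (s : Set H) : Set G :=
  {g | ∃ h ∈ s, f h * rep f g = g}

theorem pullSet_univ (f : H →* G) : pullSet f Set.univ = Set.univ := by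
  ext g
  simp only [pullSet, Set.mem_univ, iff_true, Set.mem_setOf_eq]
  obtain ⟨h, hh⟩ := rep_spec f g
  exact ⟨h, trivial, hh⟩

theorem pullSet_union (f : H →* G) (s t : Set H) :
    pullSet f (s ∪ t) = pullSet f s ∪ pullSet f t := by
  ext g
  simp only [pullSet, Set.mem_union, Set.mem_setOf_eq]
  constructor
  · rintro ⟨h, hmem | hmem, hh⟩
    · exact Or.inl ⟨h, hmem, hh⟩
    · exact Or.inr ⟨h, hmem, hh⟩
  · rintro (⟨h, hmem, hh⟩ | ⟨h, hmem, hh⟩)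
    · exact ⟨h, Or.inl hmem, hh⟩
    · exact ⟨h, Or.inr hmem, hh⟩

theorem pullSet_disjoint (f : H →* G) (hf : Function.Injective f) {s t : Set H}
    (h : Disjoint s t) : Disjoint (pullSet f s) (pullSet f t) := by
  rw [Set.disjoint_left]
  rintro g ⟨h₁, hm₁, hh₁⟩ ⟨h₂, hm₂, hh₂⟩
  have : f h₁ = f h₂ := by
    have := hh₁.trans hh₂.symm
    exact mul_right_cancel this
  have : h₁ = h₂ := hf this
  subst this
  exact Set.disjoint_left.mp h hm₁ hm₂

theorem pullSet_smul (f : H →* G) (h₀ : H) (s : Set H) :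
    pullSet f ((h₀ * ·) '' s) = (f h₀ * ·) '' pullSet f s := by
  ext g
  simp only [pullSet, Set.mem_image, Set.mem_setOf_eq]
  constructor
  · rintro ⟨h', ⟨h, hmem, rfl⟩, hh⟩
    refine ⟨f h * rep f g, ⟨h, hmem, ?_⟩, ?_⟩
    · have : rep f (f h * rep f g) = rep f (rep f g) := rep_eq f h rfl
      have h2 : rep f (rep f g) = rep f g := by
        obtain ⟨h₅, hh₅⟩ := rep_spec f g
        exact (rep_eq f h₅ hh₅).symm
      rw [this, h2]
    · rw [← mul_assoc, ← map_mul]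
      exact hh
  · rintro ⟨g', ⟨h, hmem, hh⟩, rfl⟩
    refine ⟨h₀ * h, ⟨h, hmem, rfl⟩, ?_⟩
    have : rep f (f h₀ * g') = rep f g' := rep_eq f h₀ rfl
    rw [this, map_mul, mul_assoc, hh]

noncomputable def meanComap (f : H →* G) (hf : Function.Injective f)
    (M : LeftInvariantMean G) : LeftInvariantMean H where
  m s := M.m (pullSet f s)
  nonneg s := M.nonneg _
  total := by
    show M.m (pullSet f Set.univ) = 1
    rw [pullSet_univ, M.total]
  addDisjoint s t h := by
    show M.m (pullSet f (s ∪ t)) = M.m (pullSet f s) + M.m (pullSet f t)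
    rw [pullSet_union, M.addDisjoint _ _ (pullSet_disjoint f hf h)]
  leftInvariant h₀ s := by
    show M.m (pullSet f ((h₀ * ·) '' s)) = M.m (pullSet f s)
    rw [pullSet_smul, M.leftInvariant]

/-! ### The free group on two generators is not amenable -/

def Sℓ (ℓ : Bool × Bool) : Set (FreeGroup Bool) :=
  {g | g.toWord.head? = some ℓ}

theorem mul_toWord (ℓ : Bool × Bool) (g : FreeGroup Bool)
    (h : g.toWord.head? ≠ some (ℓ.1, !ℓ.2)) :
    (FreeGroup.mk [ℓ] * g).toWord = ℓ :: g.toWord := by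
  conv_lhs => rw [← FreeGroup.mk_toWord (x := g), FreeGroup.mul_mk]
  rw [List.singleton_append, FreeGroup.toWord_mk, FreeGroup.reduce.cons]
  rw [FreeGroup.reduce_toWord]
  cases htw : g.toWord with
  | nil => rfl
  | cons hd tl =>
    simp only []
    rw [if_neg]
    rintro ⟨h1, h2⟩
    apply h
    rw [htw]
    have : hd = (ℓ.1, !ℓ.2) := by
      ext
      · exact h1.symm
      · simp [h2]
    rw [this]
    rfl

theorem cover (x : Bool) (g : FreeGroup Bool) (hg : g ∉ Sℓ (x, true)) :
    g ∈ (FreeGroup.mk [(x, true)] * ·) '' Sℓ (x, false) := by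
  refine ⟨FreeGroup.mk [(x, false)] * g, ?_, ?_⟩
  · have h : g.toWord.head? ≠ some (x, !false) := by
      simpa [Sℓ] using hg
    have := mul_toWord (x, false) g h
    simp [Sℓ, this]
  · show FreeGroup.mk [(x, true)] * (FreeGroup.mk [(x, false)] * g) = g
    have h1 : FreeGroup.mk [(x, true), (x, false)] = 1 := by
      rw [← FreeGroup.toWord_one (α := Bool)]
      apply FreeGroup.reduce.exact
      simp [FreeGroup.reduce]
    rw [← mul_assoc, FreeGroup.mul_mk, List.singleton_append, h1, one_mul]

theorem Sℓ_disjoint {ℓ ℓ' : Bool × Bool} (h : ℓ ≠ ℓ') : Disjoint (Sℓ ℓ) (Sℓ ℓ') := by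
  rw [Set.disjoint_left]
  intro g hg hg'
  exact h (Option.some_injective _ (hg.symm.trans hg'))

theorem freeGroup_not_amenable : ¬ Amenable (FreeGroup Bool) := by
  rintro ⟨M⟩
  set sa := Sℓ (true, true)
  set sa' := Sℓ (true, false)
  set sb := Sℓ (false, true)
  set sb' := Sℓ (false, false)
  have cover' : ∀ x : Bool,
      (1 : ℝ) ≤ M.m (Sℓ (x, true)) + M.m (Sℓ (x, false)) := by
    intro x
    have hcov : (Set.univ : Set (FreeGroup Bool)) ⊆
        Sℓ (x, true) ∪ (FreeGroup.mk [(x, true)] * ·) '' Sℓ (x, false) := by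
      intro g _
      by_cases hg : g ∈ Sℓ (x, true)
      · exact Or.inl hg
      · exact Or.inr (cover x g hg)
    have h1 : (1 : ℝ) ≤ M.m (Sℓ (x, true) ∪ (FreeGroup.mk [(x, true)] * ·) '' Sℓ (x, false)) := by
      rw [← M.total]
      exact mean_mono M hcov
    have h2 := mean_union_le M (Sℓ (x, true)) ((FreeGroup.mk [(x, true)] * ·) '' Sℓ (x, false))
    rw [M.leftInvariant] at h2
    linarith
  have ha := cover' true
  have hb := cover' false
  -- sum of the four is at most 1
  have hd1 : Disjoint sa sa' := Sℓ_disjoint (by decide)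
  have hd2 : Disjoint (sa ∪ sa') sb := by
    rw [Set.disjoint_union_left]
    exact ⟨Sℓ_disjoint (by decide), Sℓ_disjoint (by decide)⟩
  have hd3 : Disjoint (sa ∪ sa' ∪ sb) sb' := by
    rw [Set.disjoint_union_left, Set.disjoint_union_left]
    exact ⟨⟨Sℓ_disjoint (by decide), Sℓ_disjoint (by decide)⟩, Sℓ_disjoint (by decide)⟩
  have e1 := M.addDisjoint _ _ hd1
  have e2 := M.addDisjoint _ _ hd2
  have e3 := M.addDisjoint _ _ hd3
  have hle : M.m (sa ∪ sa' ∪ sb ∪ sb') ≤ 1 := by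
    rw [← M.total]
    exact mean_mono M (Set.subset_univ _)
  linarith

theorem not_amenable_of_free_subgroup {G : Type*} [Group G]
    (h : ∃ f : FreeGroup Bool →* G, Function.Injective f) : ¬ Amenable G := by
  rintro ⟨M⟩
  obtain ⟨f, hf⟩ := h
  exact freeGroup_not_amenable ⟨meanComap f hf M⟩

end AmalgamAux

namespace AmalgamB
open Monoid PushoutI

variable (n m : ℤ)

def letterP (p : Bool × ℤ) : PushoutI (cyclicAmalgamMaps n m) :=
  PushoutI.of (φ := cyclicAmalgamMaps n m) p.1 (Multiplicative.ofAdd p.2)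

def prodP (W : List (Bool × ℤ)) : PushoutI (cyclicAmalgamMaps n m) :=
  (W.map (letterP n m)).prod

lemma prodP_nil : prodP n m [] = 1 := rfl

lemma prodP_cons (p : Bool × ℤ) (W : List (Bool × ℤ)) :
    prodP n m (p :: W) = letterP n m p * prodP n m W := by simp [prodP]

lemma letter_mul (c : Bool) (a b : ℤ) :
    letterP n m (c, a) * letterP n m (c, b) = letterP n m (c, a + b) := by
  simp [letterP, ← map_mul, ← ofAdd_add]

lemma letter_mul' (c : Bool) (a b : ℤ) (x : PushoutI (cyclicAmalgamMaps n m)) :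
    letterP n m (c, a) * (letterP n m (c, b) * x) = letterP n m (c, a + b) * x := by
  rw [← mul_assoc, letter_mul]

lemma letter_zero (c : Bool) : letterP n m (c, 0) = 1 := by
  simp [letterP]

lemma letter_inv (c : Bool) (a : ℤ) : (letterP n m (c, a))⁻¹ = letterP n m (c, -a) := by
  rw [letterP, letterP, ← map_inv]
  norm_num

def Good (W : List (Bool × ℤ)) : Prop :=
  W.Chain' (fun p q => p.1 ≠ q.1) ∧ ∀ p ∈ W, ¬ ((cond p.1 n m) ∣ p.2)

lemma zpow_range (k : ℤ) (x : Multiplicative ℤ) :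
    x ∈ (zpowGroupHom k : Multiplicative ℤ →* Multiplicative ℤ).range ↔ k ∣ x.toAdd := by
  constructor
  · rintro ⟨y, rfl⟩
    exact ⟨y.toAdd, by simp [zpowGroupHom_apply, toAdd_zpow]⟩
  · rintro ⟨c, hc⟩
    refine ⟨Multiplicative.ofAdd c, ?_⟩
    apply Multiplicative.toAdd.injective
    simp [zpowGroupHom_apply, toAdd_zpow, hc]

lemma range_iff (i : Bool) (x : Multiplicative ℤ) :
    x ∈ (cyclicAmalgamMaps n m i).range ↔ (cond i n m) ∣ x.toAdd := by
  cases i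
  · exact zpow_range m x
  · exact zpow_range n x

lemma zpow_injective (k : ℤ) (hk : k ≠ 0) :
    Function.Injective (zpowGroupHom k : Multiplicative ℤ →* Multiplicative ℤ) := by
  intro a b hab
  have h : k * a.toAdd = k * b.toAdd := by
    have := congrArg Multiplicative.toAdd hab
    simpa [zpowGroupHom_apply, toAdd_zpow] using this
  exact Multiplicative.toAdd.injective (mul_left_cancel₀ hk h)

lemma maps_injective (hn : 2 ≤ n) (hm : 3 ≤ m) :
    ∀ i : Bool, Function.Injective (cyclicAmalgamMaps n m i) := by
  intro i
  cases i <;> simp only [cyclicAmalgamMaps, if_true, if_false, Bool.false_eq_true]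
  · exact zpow_injective m (by omega)
  · exact zpow_injective n (by omega)

lemma good_ne_one (hn : 2 ≤ n) (hm : 3 ≤ m) {W : List (Bool × ℤ)} (hW : Good n m W)
    (hne : W ≠ []) : prodP n m W ≠ 1 := by
  intro h1
  have hφ := maps_injective n m hn hm
  let w : CoprodI.Word (fun _ : Bool => Multiplicative ℤ) :=
    { toList := W.map (fun p => ⟨p.1, Multiplicative.ofAdd p.2⟩)
      ne_one := by
        intro l hl
        simp only [List.mem_map] at hl
        obtain ⟨p, hp, rfl⟩ := hl
        intro h
        simp only [ofAdd_eq_one] at h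
        exact hW.2 p hp (h ▸ dvd_zero _)
      chain_ne := by
        rw [List.isChain_map]
        exact hW.1 }
  have hred : Reduced (cyclicAmalgamMaps n m) w := by
    intro g hg
    simp only [w, List.mem_map] at hg
    obtain ⟨p, hp, rfl⟩ := hg
    rw [range_iff]
    exact hW.2 p hp
  have hprod : ofCoprodI w.prod = prodP n m W := by
    simp only [w, CoprodI.Word.prod, List.map_map, map_list_prod, prodP, Function.comp_def,
      ofCoprodI_of]
    rfl
  have := hred.eq_empty_of_mem_range hφ (by
    rw [hprod, h1]; exact one_mem _)
  have hnil : W.map (fun p => (⟨p.1, Multiplicative.ofAdd p.2⟩ : Σ _ : Bool, Multiplicative ℤ)) = [] :=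
    congrArg CoprodI.Word.toList this
  rw [List.map_eq_nil_iff] at hnil
  exact hne hnil


/-! ### Blocks and the ping-pong induction -/

def blockL : Bool × Bool → List (Bool × ℤ)
  | (true, true) => [(true,1),(false,1),(true,1),(false,2)]
  | (true, false) => [(false,-2),(true,-1),(false,-1),(true,-1)]
  | (false, true) => [(true,1),(false,2),(true,1),(false,1)]
  | (false, false) => [(false,-1),(true,-1),(false,-2),(true,-1)]

def prodFG (L : List (Bool × Bool)) : PushoutI (cyclicAmalgamMaps n m) :=
  (L.map (fun ℓ => prodP n m (blockL ℓ))).prod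

lemma prodFG_cons (ℓ : Bool × Bool) (L : List (Bool × Bool)) :
    prodFG n m (ℓ :: L) = prodP n m (blockL ℓ) * prodFG n m L := by simp [prodFG]

lemma not_dvd {k a : ℤ} (hk : 0 < k) (h1 : a ≠ 0) (h2 : |a| < k) : ¬ k ∣ a := by
  rintro ⟨c, rfl⟩
  have hc : c ≠ 0 := by rintro rfl; simp at h1
  have h3 : 1 ≤ |c| := Int.one_le_abs hc
  rw [abs_mul, abs_of_pos hk] at h2
  nlinarith

lemma take2_eq {α : Type*} {W : List α} {a b : α} (h : W.take 2 = [a, b]) :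
    ∃ t, W = a :: b :: t := by
  match W with
  | [] => simp at h
  | [x] => simp at h
  | x :: y :: t =>
    simp [List.take] at h
    exact ⟨t, by rw [h.1, h.2]⟩

lemma chain_fst {t : List (Bool × ℤ)} {c : Bool} {a b : ℤ}
    (h : List.Chain' (fun p q => p.1 ≠ q.1) ((c, a) :: t)) :
    List.Chain' (fun p q => p.1 ≠ q.1) ((c, b) :: t) := by
  cases t with
  | nil => exact List.isChain_singleton _
  | cons q t' =>
    rw [List.Chain', List.isChain_cons_cons] at h ⊢
    exact h

lemma good_block (hn : 2 ≤ n) (hm : 3 ≤ m) (ℓ : Bool × Bool) : Good n m (blockL ℓ) := by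
  have dn1 : ¬ (n ∣ (1:ℤ)) := not_dvd (by omega) (by norm_num) (by norm_num; omega)
  have dn1' : ¬ (n ∣ (-1:ℤ)) := not_dvd (by omega) (by norm_num) (by norm_num; omega)
  have dm1 : ¬ (m ∣ (1:ℤ)) := not_dvd (by omega) (by norm_num) (by norm_num; omega)
  have dm1' : ¬ (m ∣ (-1:ℤ)) := not_dvd (by omega) (by norm_num) (by norm_num; omega)
  have dm2 : ¬ (m ∣ (2:ℤ)) := not_dvd (by omega) (by norm_num) (by norm_num; omega)
  have dm2' : ¬ (m ∣ (-2:ℤ)) := not_dvd (by omega) (by norm_num) (by norm_num; omega)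
  obtain ⟨x, s⟩ := ℓ
  cases x <;> cases s <;>
    exact ⟨by simp [blockL, List.Chain', List.isChain_cons_cons], by
      simp only [blockL, List.forall_mem_cons, List.forall_mem_nil, Bool.cond_true,
        Bool.cond_false, and_true]
      tauto⟩

lemma main_ind (hn : 2 ≤ n) (hm : 3 ≤ m) :
    ∀ (L : List (Bool × Bool)) (ℓ : Bool × Bool),
      (ℓ :: L).Chain' (fun a b => ¬(a.1 = b.1 ∧ a.2 = !b.2)) →
      ∃ W, Good n m W ∧ prodP n m W = prodFG n m (ℓ :: L) ∧
        W.take 2 = (blockL ℓ).take 2 := by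
  have dn1 : ¬ (n ∣ (1:ℤ)) := not_dvd (by omega) (by norm_num) (by norm_num; omega)
  have dn1' : ¬ (n ∣ (-1:ℤ)) := not_dvd (by omega) (by norm_num) (by norm_num; omega)
  have dm1 : ¬ (m ∣ (1:ℤ)) := not_dvd (by omega) (by norm_num) (by norm_num; omega)
  have dm1' : ¬ (m ∣ (-1:ℤ)) := not_dvd (by omega) (by norm_num) (by norm_num; omega)
  have dm2 : ¬ (m ∣ (2:ℤ)) := not_dvd (by omega) (by norm_num) (by norm_num; omega)
  have dm2' : ¬ (m ∣ (-2:ℤ)) := not_dvd (by omega) (by norm_num) (by norm_num; omega)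
  intro L
  induction L with
  | nil =>
    intro ℓ _
    exact ⟨blockL ℓ, good_block n m hn hm ℓ, by simp [prodFG], rfl⟩
  | cons ℓ₂ rest ih =>
    intro ℓ hchain
    rw [List.Chain', List.isChain_cons_cons] at hchain
    obtain ⟨hR, hchain₂⟩ := hchain
    obtain ⟨W, hGood, hprod, htake⟩ := ih ℓ₂ hchain₂
    obtain ⟨x, s⟩ := ℓ
    obtain ⟨y, s₂⟩ := ℓ₂
    cases x <;> cases s <;> cases y <;> cases s₂
    all_goals obtain ⟨t, rfl⟩ := take2_eq (by simpa [blockL] using htake)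
    all_goals have hch := (List.isChain_cons_cons.mp hGood.1).2
    all_goals have ht : ∀ p ∈ t, ¬ ((cond p.1 n m) ∣ p.2) :=
      fun p hp => hGood.2 p (by simp [hp])
    -- case (F,F) (F,F) : V' then V' : concat
    · refine ⟨(false,-1)::(true,-1)::(false,-2)::(true,-1)::(false,-1)::(true,-1)::t,
        ⟨?_, ?_⟩, ?_, rfl⟩
      · simp [List.Chain', List.isChain_cons_cons, hch]
      · simp only [List.forall_mem_cons, Bool.cond_true, Bool.cond_false]
        exact ⟨dm1', dn1', dm2', dn1', dm1', dn1', ht⟩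
      · rw [prodFG_cons, ← hprod]
        simp [prodP_cons, prodP_nil, blockL, mul_assoc, letter_mul', letter_zero]
    · exact absurd ⟨rfl, rfl⟩ hR
    -- case (F,F) (T,F) : V' then U' : concat
    · refine ⟨(false,-1)::(true,-1)::(false,-2)::(true,-1)::(false,-2)::(true,-1)::t,
        ⟨?_, ?_⟩, ?_, rfl⟩
      · simp [List.Chain', List.isChain_cons_cons, hch]
      · simp only [List.forall_mem_cons, Bool.cond_true, Bool.cond_false]
        exact ⟨dm1', dn1', dm2', dn1', dm2', dn1', ht⟩
      · rw [prodFG_cons, ← hprod]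
        simp [prodP_cons, prodP_nil, blockL, mul_assoc, letter_mul', letter_zero]
    -- case (F,F) (T,T) : V' then U : cancel, W' = (F,-1)::(T,-1)::(F,-1)::t
    · have hch2 : List.Chain' (fun p q : Bool × ℤ => p.1 ≠ q.1) ((false,(-1:ℤ))::t) :=
        chain_fst (List.isChain_cons_cons.mp hGood.1).2
      refine ⟨(false,-1)::(true,-1)::(false,-1)::t, ⟨?_, ?_⟩, ?_, rfl⟩
      · simpa [List.Chain', List.isChain_cons_cons] using hch2
      · simp only [List.forall_mem_cons, Bool.cond_true, Bool.cond_false]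
        exact ⟨dm1', dn1', dm1', ht⟩
      · rw [prodFG_cons, ← hprod]
        simp [prodP_cons, prodP_nil, blockL, mul_assoc, letter_mul', letter_zero]
    · exact absurd ⟨rfl, rfl⟩ hR
    -- case (F,T) (F,T) : V then V : concat
    · refine ⟨(true,1)::(false,2)::(true,1)::(false,1)::(true,1)::(false,2)::t,
        ⟨?_, ?_⟩, ?_, rfl⟩
      · simp [List.Chain', List.isChain_cons_cons, hch]
      · simp only [List.forall_mem_cons, Bool.cond_true, Bool.cond_false]
        exact ⟨dn1, dm2, dn1, dm1, dn1, dm2, ht⟩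
      · rw [prodFG_cons, ← hprod]
        simp [prodP_cons, prodP_nil, blockL, mul_assoc, letter_mul', letter_zero]
    -- case (F,T) (T,F) : V then U' : merge, W' = (T,1)::(F,2)::(T,1)::(F,-1)::(T,-1)::t
    · refine ⟨(true,1)::(false,2)::(true,1)::(false,-1)::(true,-1)::t,
        ⟨?_, ?_⟩, ?_, rfl⟩
      · simp [List.Chain', List.isChain_cons_cons, hch]
      · simp only [List.forall_mem_cons, Bool.cond_true, Bool.cond_false]
        exact ⟨dn1, dm2, dn1, dm1', dn1', ht⟩
      · rw [prodFG_cons, ← hprod]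
        simp [prodP_cons, prodP_nil, blockL, mul_assoc, letter_mul', letter_zero]
    -- case (F,T) (T,T) : V then U : concat
    · refine ⟨(true,1)::(false,2)::(true,1)::(false,1)::(true,1)::(false,1)::t,
        ⟨?_, ?_⟩, ?_, rfl⟩
      · simp [List.Chain', List.isChain_cons_cons, hch]
      · simp only [List.forall_mem_cons, Bool.cond_true, Bool.cond_false]
        exact ⟨dn1, dm2, dn1, dm1, dn1, dm1, ht⟩
      · rw [prodFG_cons, ← hprod]
        simp [prodP_cons, prodP_nil, blockL, mul_assoc, letter_mul', letter_zero]
    -- case (T,F) (F,F) : U' then V' : concat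
    · refine ⟨(false,-2)::(true,-1)::(false,-1)::(true,-1)::(false,-1)::(true,-1)::t,
        ⟨?_, ?_⟩, ?_, rfl⟩
      · simp [List.Chain', List.isChain_cons_cons, hch]
      · simp only [List.forall_mem_cons, Bool.cond_true, Bool.cond_false]
        exact ⟨dm2', dn1', dm1', dn1', dm1', dn1', ht⟩
      · rw [prodFG_cons, ← hprod]
        simp [prodP_cons, prodP_nil, blockL, mul_assoc, letter_mul', letter_zero]
    -- case (T,F) (F,T) : U' then V : cancel, W' = (F,-2)::(T,-1)::(F,1)::t
    · have hch2 : List.Chain' (fun p q : Bool × ℤ => p.1 ≠ q.1) ((false,(1:ℤ))::t) :=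
        chain_fst (List.isChain_cons_cons.mp hGood.1).2
      refine ⟨(false,-2)::(true,-1)::(false,1)::t, ⟨?_, ?_⟩, ?_, rfl⟩
      · simpa [List.Chain', List.isChain_cons_cons] using hch2
      · simp only [List.forall_mem_cons, Bool.cond_true, Bool.cond_false]
        exact ⟨dm2', dn1', dm1, ht⟩
      · rw [prodFG_cons, ← hprod]
        simp [prodP_cons, prodP_nil, blockL, mul_assoc, letter_mul', letter_zero]
    -- case (T,F) (T,F) : U' then U' : concat
    · refine ⟨(false,-2)::(true,-1)::(false,-1)::(true,-1)::(false,-2)::(true,-1)::t,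
        ⟨?_, ?_⟩, ?_, rfl⟩
      · simp [List.Chain', List.isChain_cons_cons, hch]
      · simp only [List.forall_mem_cons, Bool.cond_true, Bool.cond_false]
        exact ⟨dm2', dn1', dm1', dn1', dm2', dn1', ht⟩
      · rw [prodFG_cons, ← hprod]
        simp [prodP_cons, prodP_nil, blockL, mul_assoc, letter_mul', letter_zero]
    · exact absurd ⟨rfl, rfl⟩ hR
    -- case (T,T) (F,F) : U then V' : merge, W' = (T,1)::(F,1)::(T,1)::(F,1)::(T,-1)::t
    · refine ⟨(true,1)::(false,1)::(true,1)::(false,1)::(true,-1)::t,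
        ⟨?_, ?_⟩, ?_, rfl⟩
      · simp [List.Chain', List.isChain_cons_cons, hch]
      · simp only [List.forall_mem_cons, Bool.cond_true, Bool.cond_false]
        exact ⟨dn1, dm1, dn1, dm1, dn1', ht⟩
      · rw [prodFG_cons, ← hprod]
        simp [prodP_cons, prodP_nil, blockL, mul_assoc, letter_mul', letter_zero]
    -- case (T,T) (F,T) : U then V : concat
    · refine ⟨(true,1)::(false,1)::(true,1)::(false,2)::(true,1)::(false,2)::t,
        ⟨?_, ?_⟩, ?_, rfl⟩
      · simp [List.Chain', List.isChain_cons_cons, hch]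
      · simp only [List.forall_mem_cons, Bool.cond_true, Bool.cond_false]
        exact ⟨dn1, dm1, dn1, dm2, dn1, dm2, ht⟩
      · rw [prodFG_cons, ← hprod]
        simp [prodP_cons, prodP_nil, blockL, mul_assoc, letter_mul', letter_zero]
    · exact absurd ⟨rfl, rfl⟩ hR
    -- case (T,T) (T,T) : U then U : concat
    · refine ⟨(true,1)::(false,1)::(true,1)::(false,2)::(true,1)::(false,1)::t,
        ⟨?_, ?_⟩, ?_, rfl⟩
      · simp [List.Chain', List.isChain_cons_cons, hch]
      · simp only [List.forall_mem_cons, Bool.cond_true, Bool.cond_false]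
        exact ⟨dn1, dm1, dn1, dm2, dn1, dm1, ht⟩
      · rw [prodFG_cons, ← hprod]
        simp [prodP_cons, prodP_nil, blockL, mul_assoc, letter_mul', letter_zero]


/-! ### From free group words to the amalgam -/

lemma chain'_of_reduce_fix :
    ∀ L : List (Bool × Bool), FreeGroup.reduce L = L →
      L.Chain' (fun a b => ¬(a.1 = b.1 ∧ a.2 = !b.2)) := by
  intro L
  induction L with
  | nil => intro _; exact List.isChain_nil
  | cons x L ih =>
    intro hL
    rw [FreeGroup.reduce.cons] at hL
    cases hr : FreeGroup.reduce L with
    | nil =>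
      rw [hr] at hL
      replace hL : [x] = x :: L := hL
      have : L = [] := by injection hL with _ h; exact h.symm
      subst this
      exact List.isChain_singleton _
    | cons hd tl =>
      rw [hr] at hL
      replace hL : (if x.1 = hd.1 ∧ x.2 = !hd.2 then tl else x :: hd :: tl) = x :: L := hL
      by_cases hc : x.1 = hd.1 ∧ x.2 = !hd.2
      · rw [if_pos hc] at hL
        exfalso
        have h1 : (FreeGroup.reduce L).length ≤ L.length :=
          FreeGroup.Red.length_le FreeGroup.reduce.red
        rw [hr] at h1
        have h2 := congrArg List.length hL
        simp at h1 h2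
        omega
      · rw [if_neg hc] at hL
        have hxl : L = hd :: tl := by
          have := hL
          injection this with _ h2
          exact h2.symm
        rw [hxl]
        exact List.IsChain.cons_cons hc (by
          rw [← hxl]
          exact ih (by rw [hr, ← hxl]))

lemma chain'_toWord (g : FreeGroup Bool) :
    g.toWord.Chain' (fun a b => ¬(a.1 = b.1 ∧ a.2 = !b.2)) :=
  chain'_of_reduce_fix _ (FreeGroup.reduce_toWord g)

def τ : Bool → PushoutI (cyclicAmalgamMaps n m) := fun x => prodP n m (blockL (x, true))

lemma block_eq_cond (x s : Bool) :
    (bif s then τ n m x else (τ n m x)⁻¹) = prodP n m (blockL (x, s)) := by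
  cases s
  · show (prodP n m (blockL (x, true)))⁻¹ = prodP n m (blockL (x, false))
    cases x <;>
      simp [prodP, blockL, mul_inv_rev, letter_inv, mul_assoc]
  · rfl

theorem amalgam_contains_free (hn : 2 ≤ n) (hm : 3 ≤ m) :
    ∃ f : FreeGroup Bool →* PushoutI (cyclicAmalgamMaps n m), Function.Injective f := by
  refine ⟨FreeGroup.lift (τ n m), ?_⟩
  rw [injective_iff_map_eq_one]
  intro g hg
  by_contra hg1
  have hL : g.toWord ≠ [] := fun h => hg1 (FreeGroup.toWord_eq_nil_iff.mp h)
  obtain ⟨ℓ, L, hLL⟩ : ∃ ℓ L, g.toWord = ℓ :: L := by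
    cases h : g.toWord with
    | nil => exact absurd h hL
    | cons a l => exact ⟨a, l, rfl⟩
  have hchain := chain'_toWord g
  rw [hLL] at hchain
  obtain ⟨W, hGood, hprod, htake⟩ := main_ind n m hn hm L ℓ hchain
  have hfg : FreeGroup.lift (τ n m) g = prodFG n m (ℓ :: L) := by
    conv_lhs => rw [← FreeGroup.mk_toWord (x := g)]
    rw [FreeGroup.lift_mk, prodFG, hLL]
    congr 1
    apply List.map_congr_left
    intro p _
    rw [← block_eq_cond]
  have hW1 : prodP n m W = 1 := by rw [hprod, ← hfg, hg]
  have hWne : W ≠ [] := by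
    intro h
    rw [h] at htake
    obtain ⟨a, b⟩ := ℓ
    cases a <;> cases b <;> simp [blockL] at htake
  exact good_ne_one n m hn hm hGood hWne hW1

end AmalgamB

/-- A group containing a nonabelian free subgroup is not amenable, and the amalgam
`ℤ *_{nℤ = mℤ} ℤ` contains a nonabelian free subgroup whenever `n ≥ 2` and `m ≥ 3`. -/
theorem free_subgroup_not_amenable_and_cyclic_amalgam_contains_free.{u}
    (n m : ℤ) (hn : 2 ≤ n) (hm : 3 ≤ m) :
    (∀ (G : Type u) [Group G],
      (∃ f : FreeGroup Bool →* G, Function.Injective f) → ¬ Amenable G) ∧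
    ∃ f : FreeGroup Bool →* PushoutI (cyclicAmalgamMaps n m), Function.Injective f :=
  ⟨fun G _ h => AmalgamAux.not_amenable_of_free_subgroup h,
   AmalgamB.amalgam_contains_free n m hn hm⟩
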